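/- For any two sets of finite perimeter E, F in ℝⁿ, the perimeters satisfy the submodularity inequality P(E ∩ F) + P(E ∪ F) ≤ P(E) + P(F). -/

import Mathlib

open MeasureTheory ENNReal Set Filter Bornology Topology

noncomputable section

abbrev Euc (n : ℕ) := EuclideanSpace ℝ (Fin n)

variable {n : ℕ}

/-- Divergence of a vector field on `ℝⁿ`. -/
def diverg (ξ : Euc n → Euc n) (x : Euc n) : ℝ :=
  ∑ i, fderiv ℝ ξ x (EuclideanSpace.single i 1) i

/-- Admissible test vector fields: `C¹`, compactly supported, bounded by one. -/
def testVF (n : ℕ) : Set (Euc n → Euc n) :=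
  {ξ | ContDiff ℝ 1 ξ ∧ HasCompactSupport ξ ∧ ∀ x, ‖ξ x‖ ≤ 1}

/-- De Giorgi perimeter of a set in `ℝⁿ`. -/
def perimeter (E : Set (Euc n)) : ℝ≥0∞ :=
  ⨆ ξ ∈ testVF n, ENNReal.ofReal (∫ x in E, diverg ξ x)

/-- Total variation of a function on `ℝⁿ`. -/
def totalVariation (u : Euc n → ℝ) : ℝ≥0∞ :=
  ⨆ ξ ∈ testVF n, ENNReal.ofReal (∫ x, u x * diverg ξ x)

/-- `E` is outward minimizing in `Ω`. -/
def OutwardMinimizing (Ω E : Set (Euc n)) : Prop :=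
  ∀ F : Set (Euc n), MeasurableSet F → E ⊆ F → F ⊆ Ω → perimeter E ≤ perimeter F

/-- Distance to the topological boundary of `F`. -/
def bdist (F : Set (Euc n)) (x : Euc n) : ℝ := Metric.infDist x (frontier F)

/-- Signed distance to the boundary of `F`: negative inside `F`, positive outside. -/
def sdist (F : Set (Euc n)) (x : Euc n) : ℝ :=
  haveI := Classical.dec (x ∈ F)
  if x ∈ F then -(bdist F x) else bdist F x

/-- The Almgren–Taylor–Wang functional `F_h(E, F) = P(E) + (1/h) ∫_{E Δ F} d_F`. -/
def ATW (h : ℝ) (E F : Set (Euc n)) : ℝ≥0∞ :=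
  perimeter E + ENNReal.ofReal (1 / h) * ∫⁻ x in symmDiff E F, ENNReal.ofReal (bdist F x)

open scoped Convolution
open ContinuousLinearMap (lsmul)

namespace PSub

open scoped Convolution
open ContinuousLinearMap (lsmul)

/-- continuity of diverg -/
lemma continuous_diverg {ξ : Euc n → Euc n} (hξ : ContDiff ℝ 1 ξ) : Continuous (diverg ξ) := by
  unfold diverg
  refine continuous_finset_sum _ fun i _ => ?_
  exact (EuclideanSpace.proj i).continuous.comp
    ((hξ.continuous_fderiv one_ne_zero).clm_apply continuous_const)

lemma hcs_diverg {ξ : Euc n → Euc n} (hξ : HasCompactSupport ξ) :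
    HasCompactSupport (diverg ξ) := by
  have : diverg ξ = (fun L : Euc n →L[ℝ] Euc n => ∑ i, L (EuclideanSpace.single i 1) i) ∘
      (fderiv ℝ ξ) := rfl
  rw [this]
  exact (hξ.fderiv ℝ).comp_left (by simp)

lemma clm_eval_sum (L : Euc n →L[ℝ] ℝ) (y : Euc n) :
    L y = ∑ i, y i * L (EuclideanSpace.single i 1) := by
  have hy : y = ∑ i, y i • EuclideanSpace.single i (1 : ℝ) := by
    have := (EuclideanSpace.basisFun (Fin n) ℝ).sum_repr y
    simp only [EuclideanSpace.basisFun_repr, EuclideanSpace.basisFun_apply] at this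
    exact this.symm
  conv_lhs => rw [hy]
  rw [map_sum]
  simp [smul_eq_mul]

/-- The integral of a directional derivative of a `C¹` compactly supported scalar
function vanishes. -/
lemma integral_fderiv_eq_zero {g : Euc n → ℝ} (hg : ContDiff ℝ 1 g)
    (hgs : HasCompactSupport g) (v : Euc n) : ∫ x, fderiv ℝ g x v = 0 := by
  have hgi : Integrable g := hg.continuous.integrable_of_hasCompactSupport hgs
  have hg'c : Continuous fun x => fderiv ℝ g x v :=
    (hg.continuous_fderiv one_ne_zero).clm_apply continuous_const
  have hg'i : Integrable fun x => fderiv ℝ g x v :=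
    hg'c.integrable_of_hasCompactSupport (hgs.fderiv_apply ℝ v)
  have h := integral_mul_fderiv_eq_neg_fderiv_mul_of_integrable
    (f := fun _ : Euc n => (1:ℝ)) (g := g) (v := v) (μ := volume)
    ?_ ?_ ?_ (fun _ _ => differentiableAt_const (1:ℝ)) (fun x _ => hg.differentiable one_ne_zero x)
  · simpa using h
  · simpa using (integrable_zero (Euc n) ℝ volume)
  · simpa using hg'i
  · simpa using hgi

/-- The integral of the divergence of a `C¹` compactly supported field vanishes. -/
lemma integral_diverg_eq_zero {w : Euc n → Euc n} (hw : ContDiff ℝ 1 w)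
    (hws : HasCompactSupport w) : ∫ x, diverg w x = 0 := by
  have hint : ∀ i : Fin n, Integrable fun x => fderiv ℝ w x (EuclideanSpace.single i 1) i := by
    intro i
    refine Continuous.integrable_of_hasCompactSupport ?_ ?_
    · exact (EuclideanSpace.proj i).continuous.comp
        ((hw.continuous_fderiv one_ne_zero).clm_apply continuous_const)
    · refine ((hws.fderiv ℝ).comp_left
        (g := fun L : Euc n →L[ℝ] Euc n => L (EuclideanSpace.single i 1) i) (by simp))
  have hsum : ∫ x, diverg w x
      = ∑ i, ∫ x, fderiv ℝ w x (EuclideanSpace.single i 1) i := by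
    rw [← integral_finset_sum _ (fun i _ => hint i)]; rfl
  rw [hsum]
  refine Finset.sum_eq_zero fun i _ => ?_
  have hgi : ContDiff ℝ 1 fun y => w y i := by
    exact (EuclideanSpace.proj (𝕜 := ℝ) i).contDiff.comp hw
  have hgsi : HasCompactSupport fun y => w y i :=
    hws.comp_left (g := fun z : Euc n => z i) (by simp)
  have hkey : ∀ x, fderiv ℝ w x (EuclideanSpace.single i 1) i
      = fderiv ℝ (fun y => w y i) x (EuclideanSpace.single i 1) := by
    intro x
    have : (fun y => w y i) = fun y => EuclideanSpace.proj (𝕜 := ℝ) i (w y) := rfl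
    rw [this]
    rw [show (fun y => (EuclideanSpace.proj (𝕜 := ℝ) i) (w y))
      = (EuclideanSpace.proj (𝕜 := ℝ) i) ∘ w from rfl]
    rw [fderiv_comp x (EuclideanSpace.proj (𝕜 := ℝ) i).differentiableAt
      ((hw.differentiable one_ne_zero) x)]
    rw [ContinuousLinearMap.fderiv]; rfl
  rw [integral_congr_ae (Eventually.of_forall hkey)]
  exact integral_fderiv_eq_zero hgi hgsi _

/-- Product rule for the divergence. -/
lemma diverg_smul {f : Euc n → ℝ} {w : Euc n → Euc n} (hf : ContDiff ℝ 1 f)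
    (hw : ContDiff ℝ 1 w) (x : Euc n) :
    diverg (fun y => f y • w y) x = f x * diverg w x + fderiv ℝ f x (w x) := by
  have hD : fderiv ℝ (fun y => f y • w y) x
      = f x • fderiv ℝ w x + (fderiv ℝ f x).smulRight (w x) :=
    fderiv_fun_smul ((hf.differentiable one_ne_zero) x) ((hw.differentiable one_ne_zero) x)
  unfold diverg
  rw [hD]
  have : ∀ i : Fin n, (f x • fderiv ℝ w x + (fderiv ℝ f x).smulRight (w x))
      (EuclideanSpace.single i 1) i
      = f x * fderiv ℝ w x (EuclideanSpace.single i 1) i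
        + fderiv ℝ f x (EuclideanSpace.single i 1) * w x i := by
    intro i
    simp [ContinuousLinearMap.add_apply, ContinuousLinearMap.smul_apply,
      ContinuousLinearMap.smulRight_apply, PiLp.add_apply, PiLp.smul_apply, smul_eq_mul]
  rw [Finset.sum_congr rfl fun i _ => this i, Finset.sum_add_distrib, ← Finset.mul_sum]
  congr 1
  rw [clm_eval_sum (fderiv ℝ f x) (w x)]
  exact Finset.sum_congr rfl fun i _ => mul_comm _ _

/-- Integration by parts against a compactly supported test field. -/
lemma ibp {f : Euc n → ℝ} {w : Euc n → Euc n} (hf : ContDiff ℝ 1 f)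
    (hw : ContDiff ℝ 1 w) (hws : HasCompactSupport w) :
    ∫ x, f x * diverg w x = - ∫ x, fderiv ℝ f x (w x) := by
  have h1 : Integrable fun x => f x * diverg w x := by
    refine Continuous.integrable_of_hasCompactSupport
      (hf.continuous.mul (continuous_diverg hw)) ?_
    exact (hcs_diverg hws).mul_left
  have h2 : Integrable fun x => fderiv ℝ f x (w x) := by
    refine Continuous.integrable_of_hasCompactSupport
      ((hf.continuous_fderiv one_ne_zero).clm_apply hw.continuous) ?_
    refine hws.mono' ?_
    intro x hx
    refine subset_closure ?_
    intro hw0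
    apply hx
    simp [Function.mem_support.mp, hw0]
  have h0 : ∫ x, diverg (fun y => f y • w y) x = 0 :=
    integral_diverg_eq_zero (hf.smul hw) (hws.smul_left (f := f))
  rw [integral_congr_ae (Eventually.of_forall fun x => diverg_smul hf hw x)] at h0
  rw [integral_add h1 h2] at h0
  linarith

lemma integrable_pairing {f : Euc n → ℝ} {w : Euc n → Euc n} (hf : ContDiff ℝ 1 f)
    (hw : Continuous w) (hws : HasCompactSupport w) :
    Integrable fun x => fderiv ℝ f x (w x) := by
  refine Continuous.integrable_of_hasCompactSupport
    ((hf.continuous_fderiv one_ne_zero).clm_apply hw) ?_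
  refine hws.mono' ?_
  intro x hx
  refine subset_closure ?_
  intro hw0
  apply hx
  simp [hw0]

/-- The smooth min/max exchange lemma. -/
lemma keyswap {u v : Euc n → ℝ} (hu : ContDiff ℝ 1 u) (hv : ContDiff ℝ 1 v)
    {ξ ζ : Euc n → Euc n} (hξ : ξ ∈ testVF n) (hζ : ζ ∈ testVF n) {δ : ℝ} (hδ : 0 < δ) :
    ∃ η₁ ∈ testVF n, ∃ η₂ ∈ testVF n,
      (∫ x, (u x + v x - Real.sqrt ((u x - v x)^2 + δ^2)) / 2 * diverg ξ x)
        + ∫ x, (u x + v x + Real.sqrt ((u x - v x)^2 + δ^2)) / 2 * diverg ζ x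
      = (∫ x, u x * diverg η₁ x) + ∫ x, v x * diverg η₂ x := by
  obtain ⟨hξ1, hξs, hξb⟩ := hξ
  obtain ⟨hζ1, hζs, hζb⟩ := hζ
  set q : Euc n → ℝ := fun x => Real.sqrt ((u x - v x)^2 + δ^2) with hq
  have hqpos : ∀ x, 0 < q x := fun x => Real.sqrt_pos.2 (by positivity)
  set s : Euc n → ℝ := fun x => (u x - v x) / q x with hs
  have hsabs : ∀ x, |s x| ≤ 1 := by
    intro x
    rw [hs, abs_div, abs_of_pos (hqpos x), div_le_one (hqpos x)]
    calc |u x - v x| = Real.sqrt ((u x - v x)^2) := (Real.sqrt_sq_eq_abs _).symm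
      _ ≤ q x := Real.sqrt_le_sqrt (by nlinarith [sq_nonneg δ])
  have hqc : ContDiff ℝ 1 q := by
    refine ContDiff.sqrt ?_ fun x => by positivity
    exact ((hu.sub hv).pow 2).add contDiff_const
  have hsc : ContDiff ℝ 1 s := (hu.sub hv).div hqc fun x => (hqpos x).ne'
  have hanneg : ∀ x, 0 ≤ (1 - s x) / 2 := fun x => by
    have := (abs_le.1 (hsabs x)).2; linarith
  have hbnneg : ∀ x, 0 ≤ (1 + s x) / 2 := fun x => by
    have := (abs_le.1 (hsabs x)).1; linarith
  have hac : ContDiff ℝ 1 fun x => (1 - s x) / 2 := (contDiff_const.sub hsc).div_const 2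
  have hbc : ContDiff ℝ 1 fun x => (1 + s x) / 2 := (contDiff_const.add hsc).div_const 2
  have hmem : ∀ (c d : Euc n → ℝ), ContDiff ℝ 1 c → ContDiff ℝ 1 d →
      (∀ x, 0 ≤ c x) → (∀ x, 0 ≤ d x) → (∀ x, c x + d x = 1) →
      (fun x => c x • ξ x + d x • ζ x) ∈ testVF n := by
    intro c d hc hd hc0 hd0 hcd
    refine ⟨(hc.smul hξ1).add (hd.smul hζ1), (hξs.smul_left (f := c)).add (hζs.smul_left (f := d)), fun x => ?_⟩
    calc ‖c x • ξ x + d x • ζ x‖ ≤ ‖c x • ξ x‖ + ‖d x • ζ x‖ := norm_add_le _ _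
      _ = c x * ‖ξ x‖ + d x * ‖ζ x‖ := by
          rw [norm_smul, norm_smul, Real.norm_eq_abs, Real.norm_eq_abs,
            abs_of_nonneg (hc0 x), abs_of_nonneg (hd0 x)]
      _ ≤ c x * 1 + d x * 1 := by
          gcongr
          · exact hc0 x
          · exact hξb x
          · exact hd0 x
          · exact hζb x
      _ = 1 := by rw [mul_one, mul_one, hcd x]
  have hη₁mem : (fun x => ((1 - s x)/2) • ξ x + ((1 + s x)/2) • ζ x) ∈ testVF n :=
    hmem _ _ hac hbc hanneg hbnneg fun x => by ring
  have hη₂mem : (fun x => ((1 + s x)/2) • ξ x + ((1 - s x)/2) • ζ x) ∈ testVF n :=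
    hmem _ _ hbc hac hbnneg hanneg fun x => by ring
  have hmc : ContDiff ℝ 1 fun x => (u x + v x - q x) / 2 := ((hu.add hv).sub hqc).div_const 2
  have hMc : ContDiff ℝ 1 fun x => (u x + v x + q x) / 2 := ((hu.add hv).add hqc).div_const 2
  have hud : Differentiable ℝ u := hu.differentiable one_ne_zero
  have hvd : Differentiable ℝ v := hv.differentiable one_ne_zero
  have half : ∀ (h : Euc n → ℝ) (D : Euc n →L[ℝ] ℝ) (x : Euc n), HasFDerivAt h D x →
      HasFDerivAt (fun y => h y / 2) ((2⁻¹:ℝ) • D) x := by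
    intro h D x hh
    have h1 := hh.const_mul (2⁻¹:ℝ)
    have hfun : (fun y => 2⁻¹ * h y) = fun y => h y / 2 := by funext y; ring
    rw [hfun] at h1
    exact h1
  have hqder : ∀ x, HasFDerivAt q (s x • (fderiv ℝ u x - fderiv ℝ v x)) x := by
    intro x
    have hw' : HasFDerivAt (fun y => u y - v y) (fderiv ℝ u x - fderiv ℝ v x) x :=
      ((hud x).hasFDerivAt).sub ((hvd x).hasFDerivAt)
    have hin' : HasFDerivAt (fun y => (u y - v y) * (u y - v y) + δ^2)
        ((u x - v x) • (fderiv ℝ u x - fderiv ℝ v x)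
          + (u x - v x) • (fderiv ℝ u x - fderiv ℝ v x)) x := (hw'.mul hw').add_const _
    have hfun : (fun y => (u y - v y) * (u y - v y) + δ^2)
        = fun y => (u y - v y)^2 + δ^2 := by funext y; ring
    rw [hfun] at hin'
    have hpos : (u x - v x)^2 + δ^2 ≠ 0 := by positivity
    have h0 := hin'.sqrt hpos
    have h2 : (1 / (2 * Real.sqrt ((u x - v x)^2 + δ^2)))
        • ((u x - v x) • (fderiv ℝ u x - fderiv ℝ v x)
          + (u x - v x) • (fderiv ℝ u x - fderiv ℝ v x))
        = s x • (fderiv ℝ u x - fderiv ℝ v x) := by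
      rw [← add_smul, smul_smul]
      congr 1
      have h3 : Real.sqrt ((u x - v x)^2 + δ^2) ≠ 0 := (hqpos x).ne'
      rw [hs, hq]
      field_simp
      ring
    rw [h2] at h0
    exact h0
  have hmder : ∀ x, HasFDerivAt (fun y => (u y + v y - q y) / 2)
      ((2⁻¹:ℝ) • ((fderiv ℝ u x + fderiv ℝ v x) - s x • (fderiv ℝ u x - fderiv ℝ v x))) x :=
    fun x => half _ _ x (((hud x).hasFDerivAt.add (hvd x).hasFDerivAt).sub (hqder x))
  have hMder : ∀ x, HasFDerivAt (fun y => (u y + v y + q y) / 2)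
      ((2⁻¹:ℝ) • ((fderiv ℝ u x + fderiv ℝ v x) + s x • (fderiv ℝ u x - fderiv ℝ v x))) x :=
    fun x => half _ _ x (((hud x).hasFDerivAt.add (hvd x).hasFDerivAt).add (hqder x))
  have hpoint : ∀ x, fderiv ℝ (fun y => (u y + v y - q y) / 2) x (ξ x)
        + fderiv ℝ (fun y => (u y + v y + q y) / 2) x (ζ x)
      = fderiv ℝ u x (((1 - s x)/2) • ξ x + ((1 + s x)/2) • ζ x)
        + fderiv ℝ v x (((1 + s x)/2) • ξ x + ((1 - s x)/2) • ζ x) := by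
    intro x
    rw [(hmder x).fderiv, (hMder x).fderiv]
    simp only [ContinuousLinearMap.smul_apply, ContinuousLinearMap.add_apply,
      ContinuousLinearMap.sub_apply, map_add, ContinuousLinearMap.map_smul_of_tower,
      smul_eq_mul]
    ring
  refine ⟨_, hη₁mem, _, hη₂mem, ?_⟩
  have e1 := ibp hmc hξ1 hξs
  have e2 := ibp hMc hζ1 hζs
  have e3 := ibp hu hη₁mem.1 hη₁mem.2.1
  have e4 := ibp hv hη₂mem.1 hη₂mem.2.1
  rw [hq] at e1 e2
  simp only at e1 e2
  rw [e1, e2, e3, e4, ← neg_add, ← neg_add]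
  congr 1
  rw [← integral_add (integrable_pairing hmc hξ1.continuous hξs)
      (integrable_pairing hMc hζ1.continuous hζs),
    ← integral_add (integrable_pairing hu hη₁mem.1.continuous hη₁mem.2.1)
      (integrable_pairing hv hη₂mem.1.continuous hη₂mem.2.1)]
  exact integral_congr_ae (Eventually.of_forall hpoint)

/-- A standard sequence of mollifiers. -/
def bumpk (n k : ℕ) : ContDiffBump (0 : Euc n) where
  rIn := ((k:ℝ)+1)⁻¹
  rOut := 2*((k:ℝ)+1)⁻¹
  rIn_pos := by positivity
  rIn_lt_rOut := by
    have : (0:ℝ) < ((k:ℝ)+1)⁻¹ := by positivity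
    linarith

/-- Mollification of the indicator function of `E`. -/
def molli (E : Set (Euc n)) (k : ℕ) : Euc n → ℝ :=
  (bumpk n k).normed volume ⋆[lsmul ℝ ℝ, volume] E.indicator (fun _ => (1:ℝ))

lemma molli_contDiff {E : Set (Euc n)} (hE : MeasurableSet E) (k : ℕ) :
    ContDiff ℝ 1 (molli E k) := by
  have h := HasCompactSupport.contDiff_convolution_left (μ := volume) (lsmul ℝ ℝ)
    (bumpk n k).hasCompactSupport_normed ((bumpk n k).contDiff_normed (μ := volume) (n := 1))
    ((locallyIntegrable_const (1:ℝ)).indicator hE)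
  exact h

lemma molli_eq {E : Set (Euc n)} (k : ℕ) (x : Euc n) :
    molli E k x = ∫ t, (bumpk n k).normed volume t * E.indicator (fun _ => (1:ℝ)) (x - t) := by
  rw [molli, convolution_def]
  simp [ContinuousLinearMap.lsmul_apply, smul_eq_mul]

lemma indicator_one_nonneg (E : Set (Euc n)) (y : Euc n) :
    0 ≤ E.indicator (fun _ => (1:ℝ)) y := by
  by_cases h : y ∈ E <;> simp [h]

lemma indicator_one_le (E : Set (Euc n)) (y : Euc n) :
    E.indicator (fun _ => (1:ℝ)) y ≤ 1 := by
  by_cases h : y ∈ E <;> simp [h]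

lemma habs3 (p q r : ℝ) (hp : 0 ≤ p) (hq : 0 ≤ q) (hq1 : q ≤ 1) : |p * q * r| ≤ p * |r| := by
  rw [abs_mul, abs_mul, abs_of_nonneg hp, abs_of_nonneg hq]
  calc p * q * |r| = p * |r| * q := by ring
    _ ≤ p * |r| * 1 := mul_le_mul_of_nonneg_left hq1 (mul_nonneg hp (abs_nonneg r))
    _ = p * |r| := mul_one _

lemma habs3' (p q r : ℝ) (hp : 0 ≤ p) (hq : 0 ≤ q) (hq1 : q ≤ 1) :
    |p * (q * r)| ≤ p * |r| := by
  rw [← mul_assoc]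
  exact habs3 p q r hp hq hq1

lemma molli_nonneg (E : Set (Euc n)) (k : ℕ) (x : Euc n) : 0 ≤ molli E k x := by
  rw [molli_eq]
  exact integral_nonneg fun t => mul_nonneg ((bumpk n k).nonneg_normed (μ := volume) t)
    (indicator_one_nonneg E _)

lemma molli_le_one {E : Set (Euc n)} (hE : MeasurableSet E) (k : ℕ) (x : Euc n) :
    molli E k x ≤ 1 := by
  rw [molli_eq]
  have hφc : Continuous ((bumpk n k).normed volume) := (bumpk n k).continuous_normed
  have hφi : Integrable ((bumpk n k).normed volume) := hφc.integrable_of_hasCompactSupport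
    (bumpk n k).hasCompactSupport_normed
  have hφnn : ∀ t, 0 ≤ (bumpk n k).normed volume t :=
    fun t => (bumpk n k).nonneg_normed (μ := volume) t
  have hgm : Measurable (E.indicator (fun _ => (1:ℝ))) := measurable_const.indicator hE
  have hint : Integrable fun t =>
      (bumpk n k).normed volume t * E.indicator (fun _ => (1:ℝ)) (x - t) := by
    refine Integrable.mono' hφi ?_ (Eventually.of_forall fun t => ?_)
    · exact hφc.aestronglyMeasurable.mul
        ((hgm.comp (measurable_const.sub measurable_id)).aestronglyMeasurable)
    · have := habs3 ((bumpk n k).normed volume t) (E.indicator (fun _ => (1:ℝ)) (x - t)) 1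
        (hφnn t) (indicator_one_nonneg E _) (indicator_one_le E _)
      simpa [Real.norm_eq_abs, abs_mul, abs_of_nonneg (hφnn t),
        abs_of_nonneg (indicator_one_nonneg E (x - t))] using
        mul_le_mul_of_nonneg_left (indicator_one_le E (x - t)) (hφnn t)
  calc ∫ t, (bumpk n k).normed volume t * E.indicator (fun _ => (1:ℝ)) (x - t)
      ≤ ∫ t, (bumpk n k).normed volume t := by
        refine integral_mono hint hφi fun t => ?_
        have h1 := mul_le_mul_of_nonneg_left (indicator_one_le E (x - t)) (hφnn t)
        simpa using h1
    _ = 1 := (bumpk n k).integral_normed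

lemma molli_tendsto {E : Set (Euc n)} (hE : MeasurableSet E) :
    ∀ᵐ x, Tendsto (fun k => molli E k x) atTop (𝓝 (E.indicator (fun _ => (1:ℝ)) x)) := by
  have h1 : Tendsto (fun k : ℕ => ((k:ℝ)+1)⁻¹) atTop (𝓝 0) := by
    simpa [one_div] using tendsto_one_div_add_atTop_nhds_zero_nat (𝕜 := ℝ)
  have hout : Tendsto (fun k : ℕ => (bumpk n k).rOut) atTop (𝓝 0) := by
    have := h1.const_mul (2:ℝ)
    simpa [bumpk] using this
  have hK : ∀ᶠ k : ℕ in atTop, (bumpk n k).rOut ≤ 2 * (bumpk n k).rIn :=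
    Eventually.of_forall fun k => le_of_eq rfl
  exact ContDiffBump.ae_convolution_tendsto_right_of_locallyIntegrable hout hK
    ((locallyIntegrable_const (1:ℝ)).indicator hE)

/-- Fubini exchange: pairing the mollified indicator against `ψ` is pairing the
indicator against the mollified `ψ`. -/
lemma pair_eq {E : Set (Euc n)} (hE : MeasurableSet E) (k : ℕ) {ψ : Euc n → ℝ}
    (hψc : Continuous ψ) (hψs : HasCompactSupport ψ) :
    ∫ x, molli E k x * ψ x
      = ∫ y, E.indicator (fun _ => (1:ℝ)) y
          * ((bumpk n k).normed volume ⋆[lsmul ℝ ℝ, volume] ψ) y := by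
  set φ := (bumpk n k).normed volume with hφ
  set g := E.indicator (fun _ => (1:ℝ)) with hg
  have hφc : Continuous φ := (bumpk n k).continuous_normed
  have hφs : HasCompactSupport φ := (bumpk n k).hasCompactSupport_normed
  have hφi : Integrable φ := hφc.integrable_of_hasCompactSupport hφs
  have hφnn : ∀ t, 0 ≤ φ t := fun t => (bumpk n k).nonneg_normed (μ := volume) t
  have hψi : Integrable ψ := hψc.integrable_of_hasCompactSupport hψs
  have hgm : Measurable g := measurable_const.indicator hE
  have hgnn : ∀ y, 0 ≤ g y := indicator_one_nonneg E
  have hgle : ∀ y, g y ≤ 1 := indicator_one_le E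
  have swap1 : ∫ x, ∫ t, φ t * g (x - t) * ψ x = ∫ t, ∫ x, φ t * g (x - t) * ψ x := by
    apply integral_integral_swap
    have hGm : AEStronglyMeasurable
        (fun p : Euc n × Euc n => φ p.2 * g (p.1 - p.2) * ψ p.1) (volume.prod volume) :=
      (((hφc.comp continuous_snd).aestronglyMeasurable).mul
        ((hgm.comp (measurable_fst.sub measurable_snd)).aestronglyMeasurable)).mul
        ((hψc.comp continuous_fst).aestronglyMeasurable)
    refine (integrable_prod_iff hGm).2 ⟨?_, ?_⟩
    · refine Eventually.of_forall fun x => ?_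
      show Integrable fun t => φ t * g (x - t) * ψ x
      refine Integrable.mono' (hφi.mul_const |ψ x|) ?_ (Eventually.of_forall fun t => ?_)
      · exact (hφc.aestronglyMeasurable.mul
          ((hgm.comp (measurable_const.sub measurable_id)).aestronglyMeasurable)).mul
          aestronglyMeasurable_const
      · exact habs3 _ _ _ (hφnn t) (hgnn _) (hgle _)
    · show Integrable fun x => ∫ t, ‖φ t * g (x - t) * ψ x‖
      refine Integrable.mono' hψi.norm (hGm.norm.integral_prod_right') ?_
      refine Eventually.of_forall fun x => ?_
      rw [Real.norm_eq_abs, abs_of_nonneg (integral_nonneg fun t => norm_nonneg _)]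
      have hin : Integrable fun t => ‖φ t * g (x - t) * ψ x‖ := by
        refine Integrable.mono' (hφi.mul_const |ψ x|) ?_ (Eventually.of_forall fun t => ?_)
        · refine ((hφc.aestronglyMeasurable.mul
            ((hgm.comp (measurable_const.sub measurable_id)).aestronglyMeasurable)).mul
            aestronglyMeasurable_const).norm
        · rw [norm_norm]
          exact habs3 _ _ _ (hφnn t) (hgnn _) (hgle _)
      calc ∫ t, ‖φ t * g (x - t) * ψ x‖ ≤ ∫ t, φ t * |ψ x| := by
            refine integral_mono hin (hφi.mul_const _) fun t => ?_
            exact habs3 _ _ _ (hφnn t) (hgnn _) (hgle _)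
        _ = |ψ x| := by rw [integral_mul_const, (bumpk n k).integral_normed, one_mul]
        _ = ‖ψ x‖ := (Real.norm_eq_abs _).symm
  have htrans : ∀ t, ∫ x, φ t * g (x - t) * ψ x = ∫ y, φ t * (g y * ψ (y + t)) := by
    intro t
    have h := integral_add_right_eq_self (μ := volume)
      (fun x => φ t * g (x - t) * ψ x) t
    rw [← h]
    refine integral_congr_ae (Eventually.of_forall fun y => ?_)
    show φ t * g (y + t - t) * ψ (y + t) = φ t * (g y * ψ (y + t))
    rw [add_sub_cancel_right, mul_assoc]
  have swap2 : ∫ t, ∫ y, φ t * (g y * ψ (y + t)) = ∫ y, ∫ t, φ t * (g y * ψ (y + t)) := by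
    apply integral_integral_swap
    have hHm : AEStronglyMeasurable
        (fun p : Euc n × Euc n => φ p.1 * (g p.2 * ψ (p.2 + p.1))) (volume.prod volume) :=
      ((hφc.comp continuous_fst).aestronglyMeasurable).mul
        (((hgm.comp measurable_snd).aestronglyMeasurable).mul
          ((hψc.comp (continuous_snd.add continuous_fst)).aestronglyMeasurable))
    refine (integrable_prod_iff hHm).2 ⟨?_, ?_⟩
    · refine Eventually.of_forall fun t => ?_
      show Integrable fun y => φ t * (g y * ψ (y + t))
      have hψt : Integrable fun y => ψ (y + t) := by
        refine Continuous.integrable_of_hasCompactSupport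
          (hψc.comp (continuous_add_right t)) ?_
        exact hψs.comp_homeomorph (Homeomorph.addRight t)
      refine Integrable.mono' ((hψt.norm.const_mul (φ t))) ?_
        (Eventually.of_forall fun y => ?_)
      · exact aestronglyMeasurable_const.mul
          ((hgm.aestronglyMeasurable).mul
            ((hψc.comp (continuous_add_right t)).aestronglyMeasurable))
      · exact habs3' _ _ _ (hφnn t) (hgnn _) (hgle _)
    · show Integrable fun t => ∫ y, ‖φ t * (g y * ψ (y + t))‖
      refine Integrable.mono' (hφi.mul_const (∫ y, ‖ψ y‖)) (hHm.norm.integral_prod_right') ?_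
      refine Eventually.of_forall fun t => ?_
      have hψt : Integrable fun y => ψ (y + t) := by
        refine Continuous.integrable_of_hasCompactSupport
          (hψc.comp (continuous_add_right t)) ?_
        exact hψs.comp_homeomorph (Homeomorph.addRight t)
      have hin : Integrable fun y => ‖φ t * (g y * ψ (y + t))‖ := by
        refine Integrable.mono' (hψt.norm.const_mul (φ t)) ?_
          (Eventually.of_forall fun y => ?_)
        · exact (aestronglyMeasurable_const.mul
            ((hgm.aestronglyMeasurable).mul
              ((hψc.comp (continuous_add_right t)).aestronglyMeasurable))).norm
        · rw [norm_norm]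
          exact habs3' _ _ _ (hφnn t) (hgnn _) (hgle _)
      rw [Real.norm_eq_abs, abs_of_nonneg (integral_nonneg fun y => norm_nonneg _)]
      calc ∫ y, ‖φ t * (g y * ψ (y + t))‖ ≤ ∫ y, φ t * ‖ψ (y + t)‖ := by
            refine integral_mono hin (hψt.norm.const_mul (φ t)) fun y => ?_
            exact habs3' _ _ _ (hφnn t) (hgnn _) (hgle _)
        _ = φ t * ∫ y, ‖ψ (y + t)‖ := integral_const_mul _ _
        _ = φ t * ∫ y, ‖ψ y‖ := by
            rw [integral_add_right_eq_self (μ := volume) (fun y => ‖ψ y‖) t]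
  have hconvpt : ∀ y, ∫ t, φ t * ψ (y + t) = (φ ⋆[lsmul ℝ ℝ, volume] ψ) y := by
    intro y
    rw [convolution_def]
    simp only [ContinuousLinearMap.lsmul_apply, smul_eq_mul]
    rw [← integral_neg_eq_self (fun t => φ t * ψ (y - t)) volume]
    refine integral_congr_ae (Eventually.of_forall fun t => ?_)
    show φ t * ψ (y + t) = φ (-t) * ψ (y - -t)
    rw [hφ, ContDiffBump.normed_neg, sub_neg_eq_add]
  calc ∫ x, molli E k x * ψ x = ∫ x, ∫ t, φ t * g (x - t) * ψ x := by
        refine integral_congr_ae (Eventually.of_forall fun x => ?_)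
        show molli E k x * ψ x = ∫ t, φ t * g (x - t) * ψ x
        rw [molli_eq, ← integral_mul_const, hφ, hg]
    _ = ∫ t, ∫ x, φ t * g (x - t) * ψ x := swap1
    _ = ∫ t, ∫ y, φ t * (g y * ψ (y + t)) :=
        integral_congr_ae (Eventually.of_forall fun t => htrans t)
    _ = ∫ y, ∫ t, φ t * (g y * ψ (y + t)) := swap2
    _ = ∫ y, g y * ((φ ⋆[lsmul ℝ ℝ, volume] ψ) y) := by
        refine integral_congr_ae (Eventually.of_forall fun y => ?_)
        show (∫ t, φ t * (g y * ψ (y + t))) = g y * (φ ⋆[lsmul ℝ ℝ, volume] ψ) y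
        rw [← hconvpt y, ← integral_const_mul]
        refine integral_congr_ae (Eventually.of_forall fun t => ?_)
        show φ t * (g y * ψ (y + t)) = g y * (φ t * ψ (y + t))
        ring

lemma diverg_conv (k : ℕ) {η : Euc n → Euc n} (hη1 : ContDiff ℝ 1 η)
    (hηs : HasCompactSupport η) (x : Euc n) :
    diverg ((bumpk n k).normed volume ⋆[lsmul ℝ ℝ, volume] η) x
      = ((bumpk n k).normed volume ⋆[lsmul ℝ ℝ, volume] (diverg η)) x := by
  set φ := (bumpk n k).normed volume with hφ
  have hφc : Continuous φ := (bumpk n k).continuous_normed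
  have hφs : HasCompactSupport φ := (bumpk n k).hasCompactSupport_normed
  have hφloc : LocallyIntegrable φ := hφc.locallyIntegrable
  have hD := hηs.hasFDerivAt_convolution_right (lsmul ℝ ℝ) hφloc hη1 x
  have hfd : fderiv ℝ (φ ⋆[lsmul ℝ ℝ, volume] η) x
      = (φ ⋆[(lsmul ℝ ℝ).precompR (Euc n), volume] fderiv ℝ η) x := hD.fderiv
  have hηd : Continuous (fderiv ℝ η) := hη1.continuous_fderiv one_ne_zero
  have hpre : ∀ (c : ℝ) (H : Euc n →L[ℝ] Euc n),
      ((lsmul ℝ ℝ).precompR (Euc n)) c H = c • H := by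
    intro c H
    ext v
    rfl
  have hintd : Integrable
      (fun t => ((lsmul ℝ ℝ).precompR (Euc n)) (φ t) (fderiv ℝ η (x - t))) := by
    refine Continuous.integrable_of_hasCompactSupport ?_ ?_
    · exact (((lsmul ℝ ℝ).precompR (Euc n)).continuous.comp hφc).clm_apply
        (hηd.comp (continuous_const.sub continuous_id))
    · refine hφs.mono' ?_
      intro t ht
      refine subset_closure ?_
      intro h0
      apply ht
      show ((lsmul ℝ ℝ).precompR (Euc n)) (φ t) (fderiv ℝ η (x - t)) = 0
      rw [hpre, h0]
      exact zero_smul ℝ _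
  have happ : ∀ v : Euc n, (φ ⋆[(lsmul ℝ ℝ).precompR (Euc n), volume] fderiv ℝ η) x v
      = ∫ t, φ t • fderiv ℝ η (x - t) v := by
    intro v
    rw [convolution_def]
    rw [ContinuousLinearMap.integral_apply hintd v]
    rfl
  have hiv : ∀ v : Euc n, Integrable fun t => φ t • fderiv ℝ η (x - t) v := by
    intro v
    refine Continuous.integrable_of_hasCompactSupport
      (hφc.smul ((hηd.clm_apply continuous_const).comp (continuous_const.sub continuous_id))) ?_
    refine hφs.mono' ?_
    intro t ht
    refine subset_closure ?_
    intro h0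
    apply ht
    show φ t • fderiv ℝ η (x - t) v = 0
    rw [h0]
    exact zero_smul ℝ _
  have lhs_eq : diverg (φ ⋆[lsmul ℝ ℝ, volume] η) x
      = ∑ i, (∫ t, φ t • fderiv ℝ η (x - t) (EuclideanSpace.single i 1)) i := by
    unfold diverg
    rw [hfd]
    exact Finset.sum_congr rfl fun i _ => by rw [happ]
  rw [lhs_eq]
  have proj_eq : ∀ i : Fin n, (∫ t, φ t • fderiv ℝ η (x - t) (EuclideanSpace.single i 1)) i
      = ∫ t, (φ t • fderiv ℝ η (x - t) (EuclideanSpace.single i 1) : Euc n) i := by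
    intro i
    have := (EuclideanSpace.proj (𝕜 := ℝ) i).integral_comp_comm
      (hiv (EuclideanSpace.single i 1))
    exact this.symm
  rw [Finset.sum_congr rfl fun i _ => proj_eq i]
  have hivi : ∀ i : Fin n, Integrable fun t =>
      (φ t • fderiv ℝ η (x - t) (EuclideanSpace.single i 1) : Euc n) i := by
    intro i
    refine Continuous.integrable_of_hasCompactSupport
      ((EuclideanSpace.proj (𝕜 := ℝ) i).continuous.comp
        (hφc.smul ((hηd.clm_apply continuous_const).comp (continuous_const.sub continuous_id)))) ?_
    refine hφs.mono' ?_
    intro t ht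
    refine subset_closure ?_
    intro h0
    apply ht
    show (φ t • fderiv ℝ η (x - t) (EuclideanSpace.single i 1) : Euc n) i = 0
    rw [h0]
    rw [zero_smul ℝ (fderiv ℝ η (x - t) (EuclideanSpace.single i 1) : Euc n)]
    rfl
  rw [← integral_finset_sum _ fun i _ => hivi i]
  rw [convolution_def]
  refine integral_congr_ae (Eventually.of_forall fun t => ?_)
  show ∑ i, (φ t • fderiv ℝ η (x - t) (EuclideanSpace.single i 1) : Euc n) i
      = (lsmul ℝ ℝ) (φ t) (diverg η (x - t))
  simp only [ContinuousLinearMap.lsmul_apply, smul_eq_mul, PiLp.smul_apply]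
  rw [diverg, Finset.mul_sum]

lemma conv_pair {E : Set (Euc n)} (hE : MeasurableSet E) (k : ℕ) {η : Euc n → Euc n}
    (hη : η ∈ testVF n) :
    ∃ θ ∈ testVF n, ∫ x, molli E k x * diverg η x = ∫ x in E, diverg θ x := by
  obtain ⟨hη1, hηs, hηb⟩ := hη
  set φ := (bumpk n k).normed volume with hφ
  have hφc : Continuous φ := (bumpk n k).continuous_normed
  have hφs : HasCompactSupport φ := (bumpk n k).hasCompactSupport_normed
  have hφi : Integrable φ := hφc.integrable_of_hasCompactSupport hφs
  have hφnn : ∀ t, 0 ≤ φ t := fun t => (bumpk n k).nonneg_normed (μ := volume) t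
  refine ⟨φ ⋆[lsmul ℝ ℝ, volume] η, ⟨?_, ?_, ?_⟩, ?_⟩
  · exact HasCompactSupport.contDiff_convolution_left (μ := volume) (lsmul ℝ ℝ)
      hφs ((bumpk n k).contDiff_normed (μ := volume) (n := 1)) hη1.continuous.locallyIntegrable
  · exact HasCompactSupport.convolution (lsmul ℝ ℝ) hφs hηs
  · intro x
    rw [convolution_def]
    calc ‖∫ t, (lsmul ℝ ℝ) (φ t) (η (x - t))‖ ≤ ∫ t, φ t := by
          refine norm_integral_le_of_norm_le hφi (Eventually.of_forall fun t => ?_)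
          show ‖(lsmul ℝ ℝ) (φ t) (η (x - t))‖ ≤ φ t
          rw [ContinuousLinearMap.lsmul_apply, norm_smul, Real.norm_eq_abs,
            abs_of_nonneg (hφnn t)]
          calc φ t * ‖η (x - t)‖ ≤ φ t * 1 :=
                mul_le_mul_of_nonneg_left (hηb _) (hφnn t)
            _ = φ t := mul_one _
      _ = 1 := (bumpk n k).integral_normed
  · have h1 := pair_eq hE k (continuous_diverg hη1) (hcs_diverg hηs)
    rw [h1]
    rw [← integral_indicator hE]
    refine integral_congr_ae (Eventually.of_forall fun y => ?_)
    show E.indicator (fun _ => (1:ℝ)) y * (φ ⋆[lsmul ℝ ℝ, volume] diverg η) y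
        = E.indicator (fun y => diverg (φ ⋆[lsmul ℝ ℝ, volume] η) y) y
    by_cases h : y ∈ E
    · simp only [Set.indicator_of_mem h, one_mul]
      exact (diverg_conv k hη1 hηs y).symm
    · simp [Set.indicator_of_notMem h]

lemma min_formula (a b : ℝ) : min a b = (a + b - |a - b|)/2 := by
  rcases le_total a b with h | h
  · rw [min_eq_left h, abs_of_nonpos (by linarith)]; ring
  · rw [min_eq_right h, abs_of_nonneg (by linarith)]; ring

lemma max_formula (a b : ℝ) : max a b = (a + b + |a - b|)/2 := by
  rcases le_total a b with h | h
  · rw [max_eq_right h, abs_of_nonpos (by linarith)]; ring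
  · rw [max_eq_left h, abs_of_nonneg (by linarith)]; ring

lemma sqrt_near_abs (w δ : ℝ) (hδ : 0 < δ) :
    |w| ≤ Real.sqrt (w^2 + δ^2) ∧ Real.sqrt (w^2 + δ^2) ≤ |w| + δ := by
  constructor
  · rw [← Real.sqrt_sq_eq_abs]
    exact Real.sqrt_le_sqrt (by nlinarith)
  · rw [← Real.sqrt_sq (by positivity : (0:ℝ) ≤ |w| + δ)]
    exact Real.sqrt_le_sqrt (by nlinarith [abs_nonneg w, sq_abs w])

lemma zero_mem_testVF : (fun _ : Euc n => (0 : Euc n)) ∈ testVF n := by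
  refine ⟨contDiff_const, ?_, fun x => by simp⟩
  have h : Function.support (fun _ : Euc n => (0 : Euc n)) = ∅ := Function.support_zero
  rw [HasCompactSupport, tsupport, h, closure_empty]
  exact isCompact_empty

lemma diverg_zero (x : Euc n) : diverg (fun _ : Euc n => (0 : Euc n)) x = 0 := by
  unfold diverg
  rw [fderiv_fun_const]
  simp

lemma setIntegral_diverg_le {E : Set (Euc n)} (hEfin : perimeter E ≠ ⊤) {θ : Euc n → Euc n}
    (hθ : θ ∈ testVF n) : ∫ x in E, diverg θ x ≤ (perimeter E).toReal := by
  rcases le_or_gt (∫ x in E, diverg θ x) 0 with h | h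
  · exact h.trans ENNReal.toReal_nonneg
  · have h1 : ENNReal.ofReal (∫ x in E, diverg θ x) ≤ perimeter E :=
      le_biSup (fun ξ : Euc n → Euc n => ENNReal.ofReal (∫ x in E, diverg ξ x)) hθ
    have h2 := ENNReal.toReal_mono hEfin h1
    rwa [ENNReal.toReal_ofReal h.le] at h2

lemma ind_min (E F : Set (Euc n)) (x : Euc n) :
    min (E.indicator (fun _ => (1:ℝ)) x) (F.indicator (fun _ => (1:ℝ)) x)
      = (E ∩ F).indicator (fun _ => (1:ℝ)) x := by
  by_cases h1 : x ∈ E <;> by_cases h2 : x ∈ F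
  · simp [h1, h2, Set.indicator_of_mem, Set.mem_inter_iff]
  · have : x ∉ E ∩ F := fun h => h2 h.2
    simp only [Set.indicator_of_mem h1, Set.indicator_of_notMem h2,
      Set.indicator_of_notMem this]
    exact min_eq_right zero_le_one
  · have : x ∉ E ∩ F := fun h => h1 h.1
    simp only [Set.indicator_of_notMem h1, Set.indicator_of_mem h2,
      Set.indicator_of_notMem this]
    exact min_eq_left zero_le_one
  · have : x ∉ E ∩ F := fun h => h1 h.1
    simp only [Set.indicator_of_notMem h1, Set.indicator_of_notMem h2,
      Set.indicator_of_notMem this]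
    exact min_self 0

lemma ind_max (E F : Set (Euc n)) (x : Euc n) :
    max (E.indicator (fun _ => (1:ℝ)) x) (F.indicator (fun _ => (1:ℝ)) x)
      = (E ∪ F).indicator (fun _ => (1:ℝ)) x := by
  by_cases h1 : x ∈ E <;> by_cases h2 : x ∈ F
  · have : x ∈ E ∪ F := Or.inl h1
    simp only [Set.indicator_of_mem h1, Set.indicator_of_mem h2, Set.indicator_of_mem this]
    exact max_self 1
  · have : x ∈ E ∪ F := Or.inl h1
    simp only [Set.indicator_of_mem h1, Set.indicator_of_notMem h2, Set.indicator_of_mem this]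
    exact max_eq_left zero_le_one
  · have : x ∈ E ∪ F := Or.inr h2
    simp only [Set.indicator_of_notMem h1, Set.indicator_of_mem h2, Set.indicator_of_mem this]
    exact max_eq_right zero_le_one
  · have : x ∉ E ∪ F := fun h => h.elim h1 h2
    simp only [Set.indicator_of_notMem h1, Set.indicator_of_notMem h2,
      Set.indicator_of_notMem this]
    exact max_self 0

lemma main_real {E F : Set (Euc n)} (hE : MeasurableSet E) (hF : MeasurableSet F)
    (hEfin : perimeter E ≠ ⊤) (hFfin : perimeter F ≠ ⊤)
    {ξ ζ : Euc n → Euc n} (hξ : ξ ∈ testVF n) (hζ : ζ ∈ testVF n) :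
    (∫ x in E ∩ F, diverg ξ x) + (∫ x in E ∪ F, diverg ζ x)
      ≤ (perimeter E).toReal + (perimeter F).toReal := by
  set T := (perimeter E).toReal + (perimeter F).toReal with hT
  have hdξc : Continuous (diverg ξ) := continuous_diverg hξ.1
  have hdξs : HasCompactSupport (diverg ξ) := hcs_diverg hξ.2.1
  have hdζc : Continuous (diverg ζ) := continuous_diverg hζ.1
  have hdζs : HasCompactSupport (diverg ζ) := hcs_diverg hζ.2.1
  have hdξi : Integrable (diverg ξ) := hdξc.integrable_of_hasCompactSupport hdξs
  have hdζi : Integrable (diverg ζ) := hdζc.integrable_of_hasCompactSupport hdζs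
  have hintξ : ∀ f : Euc n → ℝ, Continuous f → Integrable fun x => f x * diverg ξ x :=
    fun f hf => (hf.mul hdξc).integrable_of_hasCompactSupport hdξs.mul_left
  have hintζ : ∀ f : Euc n → ℝ, Continuous f → Integrable fun x => f x * diverg ζ x :=
    fun f hf => (hf.mul hdζc).integrable_of_hasCompactSupport hdζs.mul_left
  have stepA : ∀ k : ℕ, ∀ δ : ℝ, 0 < δ →
      (∫ x, (molli E k x + molli F k x
          - Real.sqrt ((molli E k x - molli F k x)^2 + δ^2)) / 2 * diverg ξ x)
        + ∫ x, (molli E k x + molli F k x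
          + Real.sqrt ((molli E k x - molli F k x)^2 + δ^2)) / 2 * diverg ζ x ≤ T := by
    intro k δ hδ
    obtain ⟨η₁, hη₁, η₂, hη₂, heq⟩ :=
      keyswap (molli_contDiff hE k) (molli_contDiff hF k) hξ hζ hδ
    rw [heq]
    obtain ⟨θ₁, hθ₁, e1⟩ := conv_pair hE k hη₁
    obtain ⟨θ₂, hθ₂, e2⟩ := conv_pair hF k hη₂
    rw [e1, e2]
    exact add_le_add (setIntegral_diverg_le hEfin hθ₁) (setIntegral_diverg_le hFfin hθ₂)
  have stepB : ∀ k : ℕ,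
      (∫ x, min (molli E k x) (molli F k x) * diverg ξ x)
        + ∫ x, max (molli E k x) (molli F k x) * diverg ζ x ≤ T := by
    intro k
    have hcu : Continuous (molli E k) := (molli_contDiff hE k).continuous
    have hcv : Continuous (molli F k) := (molli_contDiff hF k).continuous
    refine le_of_forall_pos_le_add fun ε hε => ?_
    set C := (∫ x, |diverg ξ x|) + ∫ x, |diverg ζ x| with hC
    have hC0 : 0 ≤ C :=
      add_nonneg (integral_nonneg fun x => abs_nonneg _) (integral_nonneg fun x => abs_nonneg _)
    set δ := ε / (C + 1) with hδdef
    have hδ : 0 < δ := div_pos hε (by linarith)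
    have hsq : Continuous fun x => Real.sqrt ((molli E k x - molli F k x)^2 + δ^2) :=
      Real.continuous_sqrt.comp (((hcu.sub hcv).pow 2).add continuous_const)
    have hmcont : Continuous fun x => (molli E k x + molli F k x
        - Real.sqrt ((molli E k x - molli F k x)^2 + δ^2)) / 2 :=
      ((hcu.add hcv).sub hsq).div_const 2
    have hMcont : Continuous fun x => (molli E k x + molli F k x
        + Real.sqrt ((molli E k x - molli F k x)^2 + δ^2)) / 2 :=
      ((hcu.add hcv).add hsq).div_const 2
    have hptA : ∀ x, min (molli E k x) (molli F k x) * diverg ξ x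
        - (molli E k x + molli F k x
          - Real.sqrt ((molli E k x - molli F k x)^2 + δ^2)) / 2 * diverg ξ x
        ≤ δ/2 * |diverg ξ x| := by
      intro x
      obtain ⟨hl, hr⟩ := sqrt_near_abs (molli E k x - molli F k x) δ hδ
      rw [min_formula]
      calc (molli E k x + molli F k x - |molli E k x - molli F k x|)/2 * diverg ξ x
          - (molli E k x + molli F k x
            - Real.sqrt ((molli E k x - molli F k x)^2 + δ^2)) / 2 * diverg ξ x
          = (Real.sqrt ((molli E k x - molli F k x)^2 + δ^2)
            - |molli E k x - molli F k x|)/2 * diverg ξ x := by ring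
        _ ≤ |(Real.sqrt ((molli E k x - molli F k x)^2 + δ^2)
            - |molli E k x - molli F k x|)/2 * diverg ξ x| := le_abs_self _
        _ = (Real.sqrt ((molli E k x - molli F k x)^2 + δ^2)
            - |molli E k x - molli F k x|)/2 * |diverg ξ x| := by
            rw [abs_mul, abs_of_nonneg (by linarith)]
        _ ≤ δ/2 * |diverg ξ x| :=
            mul_le_mul_of_nonneg_right (by linarith) (abs_nonneg _)
    have hptB : ∀ x, max (molli E k x) (molli F k x) * diverg ζ x
        - (molli E k x + molli F k x
          + Real.sqrt ((molli E k x - molli F k x)^2 + δ^2)) / 2 * diverg ζ x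
        ≤ δ/2 * |diverg ζ x| := by
      intro x
      obtain ⟨hl, hr⟩ := sqrt_near_abs (molli E k x - molli F k x) δ hδ
      rw [max_formula]
      calc (molli E k x + molli F k x + |molli E k x - molli F k x|)/2 * diverg ζ x
          - (molli E k x + molli F k x
            + Real.sqrt ((molli E k x - molli F k x)^2 + δ^2)) / 2 * diverg ζ x
          = ((|molli E k x - molli F k x|
            - Real.sqrt ((molli E k x - molli F k x)^2 + δ^2))/2) * diverg ζ x := by ring
        _ ≤ |((|molli E k x - molli F k x|
            - Real.sqrt ((molli E k x - molli F k x)^2 + δ^2))/2) * diverg ζ x| := le_abs_self _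
        _ = ((Real.sqrt ((molli E k x - molli F k x)^2 + δ^2)
            - |molli E k x - molli F k x|)/2) * |diverg ζ x| := by
            rw [abs_mul, abs_div, abs_sub_comm, abs_of_nonneg (by linarith)]
            norm_num
        _ ≤ δ/2 * |diverg ζ x| :=
            mul_le_mul_of_nonneg_right (by linarith) (abs_nonneg _)
    have hA : (∫ x, min (molli E k x) (molli F k x) * diverg ξ x)
        ≤ (∫ x, (molli E k x + molli F k x
          - Real.sqrt ((molli E k x - molli F k x)^2 + δ^2)) / 2 * diverg ξ x)
          + δ/2 * ∫ x, |diverg ξ x| := by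
      have h1 := integral_mono
        (f := fun x => min (molli E k x) (molli F k x) * diverg ξ x
          - (molli E k x + molli F k x
            - Real.sqrt ((molli E k x - molli F k x)^2 + δ^2)) / 2 * diverg ξ x)
        ((hintξ _ (hcu.min hcv)).sub (hintξ _ hmcont)) (hdξi.abs.const_mul (δ/2))
        (fun x => by
          show min (molli E k x) (molli F k x) * diverg ξ x
            - (molli E k x + molli F k x
              - Real.sqrt ((molli E k x - molli F k x)^2 + δ^2)) / 2 * diverg ξ x
            ≤ δ/2 * |diverg ξ x|
          exact hptA x)
      rw [integral_sub (hintξ _ (hcu.min hcv)) (hintξ _ hmcont), integral_const_mul] at h1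
      linarith
    have hB : (∫ x, max (molli E k x) (molli F k x) * diverg ζ x)
        ≤ (∫ x, (molli E k x + molli F k x
          + Real.sqrt ((molli E k x - molli F k x)^2 + δ^2)) / 2 * diverg ζ x)
          + δ/2 * ∫ x, |diverg ζ x| := by
      have h1 := integral_mono
        (f := fun x => max (molli E k x) (molli F k x) * diverg ζ x
          - (molli E k x + molli F k x
            + Real.sqrt ((molli E k x - molli F k x)^2 + δ^2)) / 2 * diverg ζ x)
        ((hintζ _ (hcu.max hcv)).sub (hintζ _ hMcont)) (hdζi.abs.const_mul (δ/2))
        (fun x => by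
          show max (molli E k x) (molli F k x) * diverg ζ x
            - (molli E k x + molli F k x
              + Real.sqrt ((molli E k x - molli F k x)^2 + δ^2)) / 2 * diverg ζ x
            ≤ δ/2 * |diverg ζ x|
          exact hptB x)
      rw [integral_sub (hintζ _ (hcu.max hcv)) (hintζ _ hMcont), integral_const_mul] at h1
      linarith
    have hδC : δ/2 * C ≤ ε := by
      rw [hδdef, div_div, div_mul_eq_mul_div, div_le_iff₀ (by linarith : (0:ℝ) < (C+1)*2)]
      nlinarith
    have := stepA k δ hδ
    calc (∫ x, min (molli E k x) (molli F k x) * diverg ξ x)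
        + ∫ x, max (molli E k x) (molli F k x) * diverg ζ x ≤ T + δ/2 * C := by
          rw [hC]; linarith
      _ ≤ T + ε := by linarith
  -- k → ∞ limits
  have hlimmin : Tendsto (fun k => ∫ x, min (molli E k x) (molli F k x) * diverg ξ x)
      atTop (𝓝 (∫ x in E ∩ F, diverg ξ x)) := by
    have hgoal : ∫ x in E ∩ F, diverg ξ x
        = ∫ x, (E ∩ F).indicator (fun _ => (1:ℝ)) x * diverg ξ x := by
      rw [← integral_indicator (hE.inter hF)]
      refine integral_congr_ae (Eventually.of_forall fun x => ?_)
      by_cases h : x ∈ E ∩ F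
      · simp [Set.indicator_of_mem h]
      · simp [Set.indicator_of_notMem h]
    rw [hgoal]
    refine tendsto_integral_of_dominated_convergence (fun x => |diverg ξ x|)
      (fun k => (((molli_contDiff hE k).continuous.min
        (molli_contDiff hF k).continuous).mul hdξc).aestronglyMeasurable)
      hdξi.abs (fun k => Eventually.of_forall fun x => ?_) ?_
    · have h1 : 0 ≤ min (molli E k x) (molli F k x) :=
        le_min (molli_nonneg E k x) (molli_nonneg F k x)
      have h2 : min (molli E k x) (molli F k x) ≤ 1 :=
        (min_le_left _ _).trans (molli_le_one hE k x)
      rw [Real.norm_eq_abs, abs_mul]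
      calc |min (molli E k x) (molli F k x)| * |diverg ξ x|
          ≤ 1 * |diverg ξ x| := by
            refine mul_le_mul_of_nonneg_right ?_ (abs_nonneg _)
            rw [abs_of_nonneg h1]; exact h2
        _ = |diverg ξ x| := one_mul _
    · filter_upwards [molli_tendsto hE, molli_tendsto hF] with x hx hy
      have := ((hx.min hy).mul_const (diverg ξ x))
      rwa [ind_min E F x] at this
  have hlimmax : Tendsto (fun k => ∫ x, max (molli E k x) (molli F k x) * diverg ζ x)
      atTop (𝓝 (∫ x in E ∪ F, diverg ζ x)) := by
    have hgoal : ∫ x in E ∪ F, diverg ζ x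
        = ∫ x, (E ∪ F).indicator (fun _ => (1:ℝ)) x * diverg ζ x := by
      rw [← integral_indicator (hE.union hF)]
      refine integral_congr_ae (Eventually.of_forall fun x => ?_)
      by_cases h : x ∈ E ∪ F
      · simp [Set.indicator_of_mem h]
      · simp [Set.indicator_of_notMem h]
    rw [hgoal]
    refine tendsto_integral_of_dominated_convergence (fun x => |diverg ζ x|)
      (fun k => (((molli_contDiff hE k).continuous.max
        (molli_contDiff hF k).continuous).mul hdζc).aestronglyMeasurable)
      hdζi.abs (fun k => Eventually.of_forall fun x => ?_) ?_
    · have h1 : 0 ≤ max (molli E k x) (molli F k x) :=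
        le_max_of_le_left (molli_nonneg E k x)
      have h2 : max (molli E k x) (molli F k x) ≤ 1 :=
        max_le (molli_le_one hE k x) (molli_le_one hF k x)
      rw [Real.norm_eq_abs, abs_mul]
      calc |max (molli E k x) (molli F k x)| * |diverg ζ x|
          ≤ 1 * |diverg ζ x| := by
            refine mul_le_mul_of_nonneg_right ?_ (abs_nonneg _)
            rw [abs_of_nonneg h1]; exact h2
        _ = |diverg ζ x| := one_mul _
    · filter_upwards [molli_tendsto hE, molli_tendsto hF] with x hx hy
      have := ((hx.max hy).mul_const (diverg ζ x))
      rwa [ind_max E F x] at this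
  exact le_of_tendsto (hlimmin.add hlimmax) (Eventually.of_forall stepB)

end PSub

/-- Submodularity of the De Giorgi perimeter:
`P(E ∩ F) + P(E ∪ F) ≤ P(E) + P(F)` for sets of finite perimeter. -/
theorem perimeter_submodular (E F : Set (Euc n))
    (hE : MeasurableSet E) (hF : MeasurableSet F)
    (hEfin : perimeter E < ⊤) (hFfin : perimeter F < ⊤) :
    perimeter (E ∩ F) + perimeter (E ∪ F) ≤ perimeter E + perimeter F := by
  have hne : (testVF n).Nonempty := ⟨_, PSub.zero_mem_testVF⟩
  have hT : ENNReal.ofReal ((perimeter E).toReal + (perimeter F).toReal)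
      ≤ perimeter E + perimeter F :=
    le_trans ENNReal.ofReal_add_le
      (add_le_add ENNReal.ofReal_toReal_le ENNReal.ofReal_toReal_le)
  have hzero : ∀ S : Set (Euc n), ∫ x in S, diverg (fun _ : Euc n => (0:Euc n)) x = 0 := by
    intro S
    have h : (fun x => diverg (fun _ : Euc n => (0:Euc n)) x) = fun _ => (0:ℝ) :=
      funext PSub.diverg_zero
    rw [h, integral_zero]
  have key : ∀ ξ' ζ' : Euc n → Euc n, ξ' ∈ testVF n → ζ' ∈ testVF n →
      (∫ x in E ∩ F, diverg ξ' x) + (∫ x in E ∪ F, diverg ζ' x)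
        ≤ (perimeter E).toReal + (perimeter F).toReal :=
    fun _ _ h1 h2 => PSub.main_real hE hF hEfin.ne hFfin.ne h1 h2
  have goal' : (⨆ ξ ∈ testVF n, ENNReal.ofReal (∫ x in E ∩ F, diverg ξ x))
      + (⨆ ζ ∈ testVF n, ENNReal.ofReal (∫ x in E ∪ F, diverg ζ x))
      ≤ perimeter E + perimeter F := by
    refine ENNReal.biSup_add_biSup_le hne hne fun ξ hξ ζ hζ => ?_
    rcases le_or_gt (∫ x in E ∩ F, diverg ξ x) 0 with hA | hA <;>
      rcases le_or_gt (∫ x in E ∪ F, diverg ζ x) 0 with hB | hB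
    · rw [ENNReal.ofReal_of_nonpos hA, ENNReal.ofReal_of_nonpos hB]
      simp
    · rw [ENNReal.ofReal_of_nonpos hA, zero_add]
      refine le_trans (ENNReal.ofReal_le_ofReal ?_) hT
      have h := key _ _ PSub.zero_mem_testVF hζ
      rw [hzero] at h
      linarith
    · rw [ENNReal.ofReal_of_nonpos hB, add_zero]
      refine le_trans (ENNReal.ofReal_le_ofReal ?_) hT
      have h := key _ _ hξ PSub.zero_mem_testVF
      rw [hzero] at h
      linarith
    · rw [← ENNReal.ofReal_add hA.le hB.le]
      exact le_trans (ENNReal.ofReal_le_ofReal (key _ _ hξ hζ)) hT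
  exact goal'


end
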